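/- arXiv:1108.4762 — 4 statements merged into one kernel-verified Lean document; each statement's English description precedes it below -/
import Mathlib

section
/- The formula D(a/b) = (D(a)·b - a·D(b))/b², where D on integers is the arithmetic derivative, is independent of the choice of representation of the fraction: for all integers a and all nonzero integers b, c, one has (D(ac)·bc - ac·D(bc))/(bc)² = (D(a)·b - a·D(b))/b². Consequently there is a well-defined function D : ℚ → ℚ extending the arithmetic derivative on ℤ and satisfying the Leibniz rule D(xy) = D(x)·y + x·D(y) for all rationals x, y. -/
/-- The arithmetic derivative on `ℕ`: `D p = 1` for primes, `D (a*b) = D a * b + a * D b`;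
explicitly `D n = n * Σ αᵢ / pᵢ = Σ αᵢ * (n / pᵢ)` for `n = ∏ pᵢ ^ αᵢ`, and `D 0 = D 1 = 0`. -/
def arithDeriv (n : ℕ) : ℕ := ∑ p ∈ n.primeFactors, n.factorization p * (n / p)

/-- The arithmetic derivative on `ℤ`: the unique odd extension of `arithDeriv`. -/
def intArithDeriv (x : ℤ) : ℤ := x.sign * arithDeriv x.natAbs

noncomputable def ratL (n : ℕ) : ℚ := ∑ p ∈ n.primeFactors, (n.factorization p : ℚ) / p

lemma factorization_zero_of_not_mem {n p : ℕ} (hp : p ∉ n.primeFactors) :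
    n.factorization p = 0 := by
  rwa [← Finsupp.notMem_support_iff, Nat.support_factorization]

lemma arithDeriv_cast (n : ℕ) : (arithDeriv n : ℚ) = n * ratL n := by
  unfold arithDeriv ratL
  rw [Finset.mul_sum]
  push_cast
  refine Finset.sum_congr rfl fun p hp => ?_
  have hpn : p ∣ n := Nat.dvd_of_mem_primeFactors hp
  have hp0 : (p : ℚ) ≠ 0 := by
    exact_mod_cast (Nat.prime_of_mem_primeFactors hp).ne_zero
  rw [Nat.cast_div hpn hp0]
  field_simp

lemma ratL_mul (m n : ℕ) (hm : m ≠ 0) (hn : n ≠ 0) : ratL (m * n) = ratL m + ratL n := by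
  unfold ratL
  have hPF : (m * n).primeFactors = m.primeFactors ∪ n.primeFactors :=
    Nat.primeFactors_mul hm hn
  have hfact : ∀ p, ((m * n).factorization p : ℚ) = m.factorization p + n.factorization p := by
    intro p
    rw [Nat.factorization_mul hm hn]
    push_cast [Finsupp.add_apply]
    ring
  rw [hPF]
  have h1 : ∑ p ∈ m.primeFactors ∪ n.primeFactors, ((m * n).factorization p : ℚ) / p
      = ∑ p ∈ m.primeFactors ∪ n.primeFactors,
          ((m.factorization p : ℚ) / p + (n.factorization p : ℚ) / p) := by
    refine Finset.sum_congr rfl fun p _ => ?_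
    rw [hfact]; ring
  rw [h1, Finset.sum_add_distrib]
  congr 1
  · refine (Finset.sum_subset Finset.subset_union_left fun p _ hp => ?_).symm
    rw [factorization_zero_of_not_mem hp]; simp
  · refine (Finset.sum_subset Finset.subset_union_right fun p _ hp => ?_).symm
    rw [factorization_zero_of_not_mem hp]; simp

lemma arithDeriv_zero : arithDeriv 0 = 0 := by simp [arithDeriv]

lemma arithDeriv_mul (m n : ℕ) :
    arithDeriv (m * n) = arithDeriv m * n + m * arithDeriv n := by
  rcases eq_or_ne m 0 with rfl | hm
  · simp [arithDeriv_zero]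
  rcases eq_or_ne n 0 with rfl | hn
  · simp [arithDeriv_zero]
  have : ((arithDeriv (m * n) : ℕ) : ℚ) = ((arithDeriv m * n + m * arithDeriv n : ℕ) : ℚ) := by
    push_cast
    rw [arithDeriv_cast, arithDeriv_cast, arithDeriv_cast, ratL_mul m n hm hn]
    push_cast
    ring
  exact_mod_cast this

lemma intArithDeriv_zero : intArithDeriv 0 = 0 := by simp [intArithDeriv]

lemma intArithDeriv_mul (x y : ℤ) :
    intArithDeriv (x * y) = intArithDeriv x * y + x * intArithDeriv y := by
  rcases eq_or_ne x 0 with rfl | hx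
  · simp [intArithDeriv_zero]
  rcases eq_or_ne y 0 with rfl | hy
  · simp [intArithDeriv_zero]
  unfold intArithDeriv
  rw [Int.natAbs_mul, arithDeriv_mul, Int.sign_mul, Nat.cast_add, Nat.cast_mul, Nat.cast_mul]
  have hxx : (x.sign : ℤ) * x.natAbs = x := Int.sign_mul_natAbs x
  have hyy : (y.sign : ℤ) * y.natAbs = y := Int.sign_mul_natAbs y
  calc x.sign * y.sign * ((arithDeriv x.natAbs : ℤ) * y.natAbs + x.natAbs * arithDeriv y.natAbs)
      = (x.sign * arithDeriv x.natAbs) * (y.sign * y.natAbs)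
        + (x.sign * x.natAbs) * (y.sign * arithDeriv y.natAbs) := by ring
    _ = _ := by rw [hxx, hyy]

noncomputable def ratDeriv (q : ℚ) : ℚ :=
  ((intArithDeriv q.num : ℚ) * q.den - q.num * intArithDeriv q.den) / (q.den : ℚ) ^ 2

lemma part1 (a b c : ℤ) (hb : b ≠ 0) (hc : c ≠ 0) :
    ((intArithDeriv (a * c) : ℚ) * (b * c) - (a * c) * intArithDeriv (b * c)) /
        ((b * c : ℤ) : ℚ) ^ 2 =
      ((intArithDeriv a : ℚ) * b - a * intArithDeriv b) / (b : ℚ) ^ 2 := by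
  have hbQ : (b : ℚ) ≠ 0 := Int.cast_ne_zero.mpr hb
  have hcQ : (c : ℚ) ≠ 0 := Int.cast_ne_zero.mpr hc
  rw [intArithDeriv_mul, intArithDeriv_mul]
  push_cast
  field_simp
  ring

lemma ratDeriv_repr (a b : ℤ) (hb : b ≠ 0) :
    ratDeriv ((a : ℚ) / b) =
      ((intArithDeriv a : ℚ) * b - a * intArithDeriv b) / (b : ℚ) ^ 2 := by
  set q : ℚ := (a : ℚ) / b with hq
  have hbQ : (b : ℚ) ≠ 0 := Int.cast_ne_zero.mpr hb
  have hcross : a * (q.den : ℤ) = q.num * b := by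
    have h1 : (q.num : ℚ) / q.den = (a : ℚ) / b := by rw [Rat.num_div_den]
    have hden : ((q.den : ℕ) : ℚ) ≠ 0 := by exact_mod_cast q.den_nz
    field_simp at h1
    have : (a : ℚ) * q.den = q.num * b := by linear_combination -h1
    exact_mod_cast this
  have hdvd : (q.den : ℤ) ∣ b := by
    have hcop : IsCoprime (q.den : ℤ) q.num := by
      rw [Int.isCoprime_iff_gcd_eq_one]
      simpa [Int.gcd, Nat.coprime_comm] using q.reduced
    have : (q.den : ℤ) ∣ q.num * b := ⟨a, by linarith [hcross]⟩
    exact hcop.dvd_of_dvd_mul_left this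
  obtain ⟨c, hcb⟩ := hdvd
  have hc : c ≠ 0 := by rintro rfl; simp at hcb; exact hb hcb
  have hdz : (q.den : ℤ) ≠ 0 := by exact_mod_cast q.den_nz
  have ha : a = q.num * c := by
    have : a * (q.den : ℤ) = (q.num * c) * q.den := by rw [hcross, hcb]; ring
    exact mul_right_cancel₀ hdz this
  have hcQ : (c : ℚ) ≠ 0 := Int.cast_ne_zero.mpr hc
  have hdenQ : ((q.den : ℕ) : ℚ) ≠ 0 := by exact_mod_cast q.den_nz
  have haQ : (a : ℚ) = q.num * c := by exact_mod_cast ha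
  have hbQ2 : (b : ℚ) = (q.den : ℕ) * c := by exact_mod_cast hcb
  have haD : (intArithDeriv a : ℚ) = intArithDeriv q.num * c + q.num * intArithDeriv c := by
    rw [ha, intArithDeriv_mul]; push_cast; ring
  have hbD : (intArithDeriv b : ℚ)
      = intArithDeriv (q.den : ℤ) * c + (q.den : ℕ) * intArithDeriv c := by
    rw [hcb, intArithDeriv_mul]; push_cast; ring
  rw [ratDeriv, haQ, hbQ2, haD, hbD]
  field_simp
  ring

/-- The formula `D (a/b) = (D a * b - a * D b) / b²` does not depend on the chosen
representation of the fraction; consequently there is a well-defined `D : ℚ → ℚ`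
extending the arithmetic derivative on `ℤ` and satisfying the Leibniz rule. -/
theorem stmt_8 :
    (∀ a b c : ℤ, b ≠ 0 → c ≠ 0 →
      ((intArithDeriv (a * c) : ℚ) * (b * c) - (a * c) * intArithDeriv (b * c)) /
          ((b * c : ℤ) : ℚ) ^ 2 =
        ((intArithDeriv a : ℚ) * b - a * intArithDeriv b) / (b : ℚ) ^ 2) ∧
    (∃ D : ℚ → ℚ, (∀ n : ℤ, D n = intArithDeriv n) ∧
      (∀ x y : ℚ, D (x * y) = D x * y + x * D y)) := by
  refine ⟨part1, ratDeriv, fun n => ?_, fun x y => ?_⟩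
  · have h := ratDeriv_repr n 1 one_ne_zero
    have h1 : intArithDeriv 1 = 0 := by
      simp [intArithDeriv, arithDeriv]
    simpa [h1] using h
  · have L : ∀ a b c d : ℤ, b ≠ 0 → d ≠ 0 →
        ratDeriv ((a : ℚ) / b * ((c : ℚ) / d)) =
          ratDeriv ((a : ℚ) / b) * ((c : ℚ) / d) + ((a : ℚ) / b) * ratDeriv ((c : ℚ) / d) := by
      intro a b c d hb hd
      have hbQ : (b : ℚ) ≠ 0 := Int.cast_ne_zero.mpr hb
      have hdQ : (d : ℚ) ≠ 0 := Int.cast_ne_zero.mpr hd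
      have h : (a : ℚ) / b * ((c : ℚ) / d) = ((a * c : ℤ) : ℚ) / ((b * d : ℤ) : ℚ) := by
        push_cast; ring
      rw [h, ratDeriv_repr (a * c) (b * d) (mul_ne_zero hb hd), ratDeriv_repr a b hb,
        ratDeriv_repr c d hd, intArithDeriv_mul a c, intArithDeriv_mul b d]
      push_cast
      field_simp
      ring
    have hx : (x.num : ℚ) / x.den = x := Rat.num_div_den x
    have hy : (y.num : ℚ) / y.den = y := Rat.num_div_den y
    have := L x.num x.den y.num y.den (by exact_mod_cast x.den_nz) (by exact_mod_cast y.den_nz)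
    push_cast at this
    rw [hx, hy] at this
    exact this
end

section
/- For every positive rational a and every rational L, there exists a rational x with a < x < 2a and D(x) ≥ L. -/
/-- The logarithmic arithmetic derivative `ld n = D n / n = Σ αᵢ / pᵢ` of a natural number. -/
def natLogDeriv (n : ℕ) : ℚ := ∑ p ∈ n.primeFactors, (n.factorization p : ℚ) / p

/-- The arithmetic derivative on `ℚ`: the unique function with `D p = 1` for primes
satisfying the Leibniz rule `D (x*y) = D x * y + x * D y`; explicitly
`D (± a/b) = ± (D a * b - a * D b) / b²` for coprime naturals `a`, `b`. -/
def ratArithDeriv (q : ℚ) : ℚ := q * (natLogDeriv q.num.natAbs - natLogDeriv q.den)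

lemma natLogDeriv_prime_pow {p : ℕ} (hp : p.Prime) (k : ℕ) :
    natLogDeriv (p ^ k) = (k : ℚ) / p := by
  rcases Nat.eq_zero_or_pos k with rfl | hk
  · simp [natLogDeriv]
  · unfold natLogDeriv
    rw [Nat.primeFactors_prime_pow hk.ne' hp, hp.factorization_pow]
    simp

lemma aux_main (a L : ℚ) (ha : 0 < a) (N u : ℕ) (hN : 3 * max 0 (L / a) < N)
    (hu : (2 : ℚ) ^ N ≤ a * (1 + u / 8)) (hnb : ∀ j : ℕ, a * 9 ^ u ≠ 2 ^ j) :
    ∃ x : ℚ, a < x ∧ x < 2 * a ∧ L ≤ ratArithDeriv x := by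
  have h2 : (1:ℚ) < 2 := by norm_num
  have hex : ∃ t : ℕ, a * 9 ^ u < 2 ^ t := pow_unbounded_of_one_lt _ h2
  set t := Nat.find hex with htdef
  have ht : a * 9 ^ u < 2 ^ t := Nat.find_spec hex
  -- lower bound 2^(N+3u) ≤ a * 9^u
  have hbern : (1 : ℚ) + u * (1/8) ≤ (1 + 1/8) ^ u := one_add_mul_le_pow (by norm_num) u
  have h8pos : (0:ℚ) < 8 ^ u := by positivity
  have hkey : (2:ℚ) ^ (N + 3*u) ≤ a * 9 ^ u := by
    have h1 : ((1:ℚ) + 1/8) ^ u * 8 ^ u = 9 ^ u := by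
      rw [← mul_pow]; norm_num
    have h2' : (2:ℚ) ^ (N + 3*u) = 2 ^ N * 8 ^ u := by
      rw [pow_add, pow_mul]; norm_num
    have h3 : (2:ℚ) ^ N * 8 ^ u ≤ a * (1 + u/8) * 8 ^ u := by
      apply mul_le_mul_of_nonneg_right hu h8pos.le
    have h4 : a * (1 + u/8) * 8 ^ u ≤ a * 9 ^ u := by
      rw [← h1]
      have hb : (1:ℚ) + u/8 ≤ (1 + 1/8) ^ u := by
        calc (1:ℚ) + u/8 = 1 + u * (1/8) := by ring
        _ ≤ _ := hbern
      calc a * (1 + u/8) * 8^u = a * ((1 + u/8) * 8^u) := by ring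
        _ ≤ a * ((1 + 1/8)^u * 8^u) :=
            mul_le_mul_of_nonneg_left (mul_le_mul_of_nonneg_right hb h8pos.le) ha.le
    linarith [h2' ▸ h3]
  have htgt : N + 3*u < t := by
    have : (2:ℚ) ^ (N + 3*u) < 2 ^ t := lt_of_le_of_lt hkey ht
    exact (pow_lt_pow_iff_right₀ h2).mp this
  have ht1 : 1 ≤ t := by omega
  -- minimality: 2^(t-1) ≤ a * 9^u, and strict by hnb
  have hmin : (2:ℚ) ^ (t-1) ≤ a * 9 ^ u := by
    by_contra hc
    push_neg at hc
    exact Nat.find_min hex (by omega) hc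
  have hminlt : (2:ℚ) ^ (t-1) < a * 9 ^ u := lt_of_le_of_ne hmin (fun h => hnb (t-1) h.symm)
  have hupper : (2:ℚ) ^ t < 2 * (a * 9 ^ u) := by
    have : (2:ℚ) ^ t = 2 * 2 ^ (t-1) := by
      rw [← pow_succ']
      congr 1
      omega
    rw [this]; linarith
  -- the rational x
  have hcop : ((2:ℤ)^t).natAbs.Coprime (3 ^ (2*u)) := by
    rw [Int.natAbs_pow]
    exact Nat.Coprime.pow _ _ (by norm_num)
  set x : ℚ := Rat.mk' ((2:ℤ)^t) ((3:ℕ)^(2*u)) (pow_ne_zero _ (by norm_num)) hcop with hxdef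
  have hxval : x = (2:ℚ)^t / (3:ℚ)^(2*u) := by
    rw [hxdef, Rat.mk_eq_divInt, Rat.divInt_eq_div]
    push_cast
    ring
  have h9 : (3:ℚ)^(2*u) = 9 ^ u := by rw [pow_mul]; norm_num
  have h3pos : (0:ℚ) < (3:ℚ)^(2*u) := by positivity
  have hax : a < x := by
    rw [hxval, lt_div_iff₀ h3pos, h9]; linarith [ht]
  have hx2a : x < 2 * a := by
    rw [hxval, div_lt_iff₀ h3pos, h9]; linarith [hupper]
  refine ⟨x, hax, hx2a, ?_⟩
  -- compute the derivative
  have hnum : x.num = (2:ℤ)^t := rfl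
  have hden : x.den = 3^(2*u) := rfl
  have hD : ratArithDeriv x = x * ((t : ℚ)/2 - (2*u : ℕ)/3) := by
    have hna : ((2:ℤ)^t).natAbs = 2^t := by rw [Int.natAbs_pow]; rfl
    rw [ratArithDeriv, hnum, hden, hna, natLogDeriv_prime_pow Nat.prime_two,
      natLogDeriv_prime_pow Nat.prime_three]
    push_cast
    ring
  rw [hD]
  have hC : max 0 (L/a) < (t:ℚ)/2 - (2*u:ℕ)/3 := by
    have htq : (N:ℚ) + 3*u + 1 ≤ t := by exact_mod_cast htgt
    push_cast
    have hNq : 3 * max 0 (L/a) < (N:ℚ) := by exact_mod_cast hN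
    linarith
  have hxpos : 0 < x := lt_trans ha hax
  have hLa : L ≤ a * max 0 (L/a) := by
    rcases le_or_gt L 0 with h | h
    · have : a * max 0 (L/a) ≥ 0 := by positivity
      linarith
    · have : L/a ≤ max 0 (L/a) := le_max_right _ _
      have := mul_le_mul_of_nonneg_left this ha.le
      rw [mul_div_cancel₀ _ ha.ne'] at this
      linarith
  calc L ≤ a * max 0 (L/a) := hLa
    _ ≤ x * ((t : ℚ)/2 - (2*u : ℕ)/3) := by
        apply mul_le_mul hax.le hC.le (le_max_left _ _) hxpos.le


/-- For every positive rational `a` and every rational `L` there is a rational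
`x ∈ (a, 2a)` with `D x ≥ L`. -/
theorem stmt_12 (a : ℚ) (ha : 0 < a) (L : ℚ) :
    ∃ x : ℚ, a < x ∧ x < 2 * a ∧ L ≤ ratArithDeriv x := by
  obtain ⟨N, hN⟩ := exists_nat_gt (3 * max 0 (L / a))
  obtain ⟨u₀, hu₀⟩ := exists_nat_gt ((8 : ℚ) * (2 ^ N / a - 1))
  have hcancel : a * (2 ^ N / a) = 2 ^ N := mul_div_cancel₀ _ ha.ne'
  have hu : ∀ u : ℕ, u₀ ≤ u → (2 : ℚ) ^ N ≤ a * (1 + u / 8) := by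
    intro u huu
    have huq : (u₀ : ℚ) ≤ u := by exact_mod_cast huu
    nlinarith [hu₀, hcancel]
  by_cases hb : ∀ j : ℕ, a * 9 ^ u₀ ≠ 2 ^ j
  · exact aux_main a L ha N u₀ hN (hu u₀ le_rfl) hb
  · push_neg at hb
    obtain ⟨j, hj⟩ := hb
    apply aux_main a L ha N (u₀ + 1) hN (hu _ (Nat.le_succ _))
    intro k hk
    have h9 : a * 9 ^ (u₀ + 1) = 9 * (a * 9 ^ u₀) := by ring
    rw [h9, hj] at hk
    -- 9 * 2^j = 2^k is impossible
    have hklb : (2:ℚ) ^ (j + 3) < 2 ^ k := by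
      rw [← hk, pow_add]
      nlinarith [pow_pos (by norm_num : (0:ℚ)<2) j]
    have hkub : (2:ℚ) ^ k < 2 ^ (j + 4) := by
      rw [← hk, pow_add]
      nlinarith [pow_pos (by norm_num : (0:ℚ)<2) j]
    have h1 : j + 3 < k := (pow_lt_pow_iff_right₀ (by norm_num : (1:ℚ) < 2)).mp hklb
    have h2 : k < j + 4 := (pow_lt_pow_iff_right₀ (by norm_num : (1:ℚ) < 2)).mp hkub
    omega
end

section
/- For all rationals a < b and every rational L, there exist rationals x and y with a < x < b and a < y < b such that D(x) ≥ L and D(y) ≤ L. That is, every open rational interval contains rational numbers with arbitrarily large and arbitrarily small arithmetic derivative. -/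
section AuxArith


lemma natLogDeriv_nonneg (n : ℕ) : 0 ≤ natLogDeriv n := by
  apply Finset.sum_nonneg; intro p hp; positivity

lemma le_natLogDeriv (n : ℕ) : ((n.factorization 2 : ℚ))/2 ≤ natLogDeriv n := by
  by_cases h : 2 ∈ n.primeFactors
  · exact Finset.single_le_sum (f := fun p => (n.factorization p : ℚ)/p)
      (fun p _ => by positivity) h
  · have h0 : n.factorization 2 = 0 := by
      rw [← Nat.support_factorization] at h
      exact Finsupp.notMem_support_iff.mp h
    rw [h0]; simpa using natLogDeriv_nonneg n

lemma natLogDeriv_prime (p : ℕ) (hp : p.Prime) : natLogDeriv p = 1/p := by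
  simp [natLogDeriv, hp.primeFactors, hp.factorization]

lemma natLogDeriv_two_pow (k : ℕ) (hk : k ≠ 0) : natLogDeriv (2^k) = k/2 := by
  simp [natLogDeriv, Nat.primeFactors_prime_pow hk Nat.prime_two,
    Nat.Prime.factorization_pow, Nat.prime_two.factorization]

lemma three_le_of_mem {m p : ℕ} (ho : Odd m) (hp : p ∈ m.primeFactors) : 3 ≤ p := by
  have hpp := Nat.prime_of_mem_primeFactors hp
  have hdvd := Nat.dvd_of_mem_primeFactors hp
  rcases hpp.two_le.lt_or_eq with h | h
  · omega
  · exfalso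
    rw [← h] at hdvd
    rw [Nat.odd_iff] at ho
    omega

lemma odd_pow_le {m : ℕ} (hm : m ≠ 0) (ho : Odd m) :
    3 ^ (∑ p ∈ m.primeFactors, m.factorization p) ≤ m := by
  conv_rhs => rw [← Nat.factorization_prod_pow_eq_self hm]
  rw [Finsupp.prod, Nat.support_factorization, ← Finset.prod_pow_eq_pow_sum]
  exact Finset.prod_le_prod (fun i _ => by positivity)
    (fun i hi => Nat.pow_le_pow_left (three_le_of_mem ho hi) _)

lemma natLogDeriv_le_odd {m : ℕ} (ho : Odd m) :
    natLogDeriv m ≤ ((∑ p ∈ m.primeFactors, m.factorization p : ℕ) : ℚ)/3 := by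
  rw [Nat.cast_sum, Finset.sum_div]
  apply Finset.sum_le_sum
  intro p hp
  have h3 : (3:ℚ) ≤ p := by exact_mod_cast three_le_of_mem ho hp
  gcongr

set_option maxHeartbeats 1000000 in
lemma exists_big (a b : ℚ) (hab : a < b) (L : ℚ) :
    ∃ x : ℚ, a < x ∧ x < b ∧ L ≤ ratArithDeriv x := by
  by_cases hb : 0 < b
  · -- positive case
    set c := max a (b/2) with hcdef
    have hcb : c < b := max_lt hab (by linarith)
    have hc0 : 0 < c := lt_of_lt_of_le (by linarith : (0:ℚ) < b/2) (le_max_right _ _)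
    have hca : a ≤ c := le_max_left _ _
    have hcb2 : b/2 ≤ c := le_max_right _ _
    set k := max 4 ⌈4*L/b + 2⌉₊ with hkdef
    have hk4 : 4 ≤ k := le_max_left _ _
    have hk4' : (4:ℚ) ≤ k := by exact_mod_cast hk4
    have hkL : 4*L/b + 2 ≤ (k:ℚ) := by
      refine le_trans (Nat.le_ceil _) ?_
      exact_mod_cast le_max_right 4 _
    have h2k : (0:ℚ) < 2^k := by positivity
    obtain ⟨p, hple, hp⟩ := Nat.exists_infinite_primes (max 3 (⌈(2^(k+1) : ℚ)/(b - c)⌉₊ + 1))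
    have hp3 : 3 ≤ p := le_trans (le_max_left _ _) hple
    have hp0 : (0:ℚ) < p := by positivity
    have hpgt : (2^(k+1) : ℚ)/(b-c) < p := by
      have h1 : ⌈(2^(k+1):ℚ)/(b-c)⌉₊ + 1 ≤ p := le_trans (le_max_right _ _) hple
      calc (2^(k+1):ℚ)/(b-c) ≤ (⌈(2^(k+1):ℚ)/(b-c)⌉₊ : ℚ) := Nat.le_ceil _
        _ < p := by exact_mod_cast Nat.lt_of_succ_le h1
    rw [div_lt_iff₀ (by linarith : (0:ℚ) < b - c)] at hpgt
    -- interval (c*p/2^k, b*p/2^k) has length > 2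
    set lo : ℚ := c*p/2^k with hlodef
    set hi : ℚ := b*p/2^k with hhidef
    have hlohi : lo + 2 < hi := by
      rw [hlodef, hhidef, div_add' _ _ _ (ne_of_gt h2k), div_lt_div_iff₀ h2k h2k]
      have : (2:ℚ)^(k+1) = 2 * 2^k := by ring
      nlinarith [h2k]
    have hlo0 : 0 ≤ lo := by positivity
    set j : ℤ := ⌊lo⌋ with hjdef
    have hj0 : 0 ≤ j := Int.floor_nonneg.mpr hlo0
    have hj1 : lo < ((j+1 : ℤ) : ℚ) := by push_cast; exact Int.lt_floor_add_one lo
    have hjle : ((j:ℤ):ℚ) ≤ lo := Int.floor_le lo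
    obtain ⟨e, he1, he2, he3, he4⟩ :
        ∃ e : ℤ, lo < (e:ℚ) ∧ (e:ℚ) < hi ∧ 0 < e ∧ ¬ (p:ℤ) ∣ e := by
      by_cases hd : (p:ℤ) ∣ (j+1)
      · refine ⟨j+2, by push_cast; push_cast at hj1 ⊢; linarith, by push_cast; linarith,
          by omega, ?_⟩
        intro hd2
        have h1 : (p:ℤ) ∣ 1 := by
          have := dvd_sub hd2 hd
          simpa using this
        have := Int.le_of_dvd one_pos h1
        omega
      · exact ⟨j+1, hj1, by push_cast; linarith, by omega, hd⟩
    -- build the rational x = e * 2^k / p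
    have hpne : p ≠ 0 := by omega
    have hcop : (e * 2^k).natAbs.Coprime p := by
      rw [Nat.coprime_comm]
      refine hp.coprime_iff_not_dvd.mpr ?_
      intro hh
      have hdvd : (p:ℤ) ∣ e * 2^k := Int.natCast_dvd.mpr hh
      have hpZ : Prime (p:ℤ) := Nat.prime_iff_prime_int.mp hp
      rcases hpZ.dvd_mul.mp hdvd with h | h
      · exact he4 h
      · have h2 : (p:ℤ) ∣ 2 := hpZ.dvd_of_dvd_pow h
        have := Int.le_of_dvd (by norm_num) h2
        omega
    set x : ℚ := Rat.mk' (e * 2^k) p hpne hcop with hxdef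
    have hxval : x = ((e:ℚ) * 2^k) / p := by
      rw [hxdef, Rat.mk_eq_divInt, Rat.divInt_eq_div]
      push_cast; ring
    have hxc : c < x := by
      rw [hxval, lt_div_iff₀ hp0]
      rw [hlodef, div_lt_iff₀ h2k] at he1
      linarith
    have hxb : x < b := by
      rw [hxval, div_lt_iff₀ hp0]
      rw [hhidef, lt_div_iff₀ h2k] at he2
      linarith
    refine ⟨x, lt_of_le_of_lt hca hxc, hxb, ?_⟩
    -- derivative bound
    have hnum : x.num = e * 2^k := rfl
    have hden : x.den = p := rfl
    have hnatAbs : x.num.natAbs = e.natAbs * 2^k := by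
      rw [hnum, Int.natAbs_mul, Int.natAbs_pow]
      rfl
    have hene : e.natAbs * 2^k ≠ 0 := by
      have : e.natAbs ≠ 0 := by omega
      positivity
    have hfact : k ≤ (e.natAbs * 2^k).factorization 2 := by
      rw [← Nat.Prime.pow_dvd_iff_le_factorization Nat.prime_two hene]
      exact ⟨e.natAbs, mul_comm _ _⟩
    have hA : (k:ℚ)/2 ≤ natLogDeriv x.num.natAbs := by
      rw [hnatAbs]
      refine le_trans ?_ (le_natLogDeriv _)
      have : (k:ℚ) ≤ ((e.natAbs * 2^k).factorization 2 : ℚ) := by exact_mod_cast hfact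
      linarith
    have hB : natLogDeriv x.den ≤ 1 := by
      rw [hden, natLogDeriv_prime p hp]
      rw [div_le_one₀ hp0]
      have hp3' : (3:ℚ) ≤ p := by exact_mod_cast hp3
      linarith
    have hDx : ratArithDeriv x = x * (natLogDeriv x.num.natAbs - natLogDeriv x.den) := rfl
    rw [hDx]
    have hxpos : 0 < x := lt_trans hc0 hxc
    have h1 : (k:ℚ)/2 - 1 ≤ natLogDeriv x.num.natAbs - natLogDeriv x.den := by linarith
    have h2 : (0:ℚ) ≤ (k:ℚ)/2 - 1 := by linarith
    have hxhalf : b/2 ≤ x := le_trans hcb2 (le_of_lt hxc)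
    have h3 : b/2 * ((k:ℚ)/2 - 1) ≤ x * (natLogDeriv x.num.natAbs - natLogDeriv x.den) :=
      mul_le_mul hxhalf h1 h2 (le_of_lt hxpos)
    have h4 : 4*L/b ≤ (k:ℚ) - 2 := by linarith
    rw [div_le_iff₀ hb] at h4
    nlinarith
  · -- negative case : b ≤ 0
    push_neg at hb
    have ha0 : a < 0 := lt_of_lt_of_le hab hb
    set c := min b (a/2) with hcdef
    have hac : a < c := lt_min hab (by linarith)
    have hca2 : c ≤ a/2 := min_le_right _ _
    have hcb : c ≤ b := min_le_left _ _
    have hc0 : c < 0 := lt_of_le_of_lt hca2 (by linarith)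
    set k := max (max (max 1 ⌈2/(c-a)⌉₊) ⌈-2*a⌉₊) ⌈12*L/(-a)⌉₊ with hkdef
    have hk1 : 1 ≤ k := le_trans (le_max_left _ _) (le_trans (le_max_left _ _) (le_max_left _ _))
    have hkc : (⌈2/(c-a)⌉₊ : ℕ) ≤ k :=
      le_trans (le_max_right _ _) (le_trans (le_max_left _ _) (le_max_left _ _))
    have hka : (-2*a : ℚ) ≤ k := by
      refine le_trans (Nat.le_ceil _) ?_
      exact_mod_cast le_trans (le_max_right _ _) (le_max_left _ _)
    have hkL : 12*L/(-a) ≤ (k:ℚ) := by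
      refine le_trans (Nat.le_ceil _) ?_
      exact_mod_cast le_max_right _ _
    have h2k : (0:ℚ) < 2^k := by positivity
    -- 2^k (c - a) > 2
    have hklt : (k:ℚ) < 2^k := by exact_mod_cast (Nat.lt_two_pow_self (n := k))
    have hkc' : 2/(c-a) ≤ (k:ℚ) := le_trans (Nat.le_ceil _) (by exact_mod_cast hkc)
    have hgap : 2 < 2^k * (c - a) := by
      rw [div_le_iff₀ (by linarith : (0:ℚ) < c - a)] at hkc'
      nlinarith
    -- Bernoulli : (-a) * 2^k ≤ 3^k
    have hbern : (-a) * 2^k ≤ (3:ℚ)^k := by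
      have h1 : 1 + (k:ℚ)*(1/2) ≤ (1+1/2)^k := one_add_mul_le_pow (by norm_num) k
      have h2 : (-a) ≤ (1+1/2:ℚ)^k := by linarith
      calc (-a) * 2^k ≤ (1+1/2:ℚ)^k * 2^k :=
            mul_le_mul_of_nonneg_right h2 (le_of_lt h2k)
        _ = 3^k := by rw [← mul_pow]; norm_num
    set lo : ℚ := (-c)*2^k with hlodef
    set hi : ℚ := (-a)*2^k with hhidef
    have hlohi : lo + 2 < hi := by
      rw [hlodef, hhidef]; linarith [hgap]
    have hlo0 : 0 ≤ lo := by
      rw [hlodef]; exact mul_nonneg (by linarith) (le_of_lt h2k)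
    set j : ℤ := ⌊lo⌋ with hjdef
    have hj0 : 0 ≤ j := Int.floor_nonneg.mpr hlo0
    have hj1 : lo < ((j+1 : ℤ) : ℚ) := by push_cast; exact Int.lt_floor_add_one lo
    have hjle : ((j:ℤ):ℚ) ≤ lo := Int.floor_le lo
    obtain ⟨e, he1, he2, he3, he4⟩ :
        ∃ e : ℤ, lo < (e:ℚ) ∧ (e:ℚ) < hi ∧ 0 < e ∧ Odd e := by
      rcases Int.even_or_odd (j+1) with hpar | hpar
      · exact ⟨j+2, by push_cast; push_cast at hj1; linarith, by push_cast; linarith,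
          by omega, by rcases hpar with ⟨t, ht⟩; exact ⟨t, by omega⟩⟩
      · exact ⟨j+1, hj1, by push_cast; linarith, by omega, hpar⟩
    have h2kne : (2:ℕ)^k ≠ 0 := by positivity
    have hcop : (-e).natAbs.Coprime (2^k) := by
      rw [Int.natAbs_neg]
      exact Nat.Coprime.pow_right k (Nat.coprime_two_right.mpr (Int.natAbs_odd.mpr he4))
    set x : ℚ := Rat.mk' (-e) (2^k) h2kne hcop with hxdef
    have hxval : x = -(e:ℚ) / 2^k := by
      rw [hxdef, Rat.mk_eq_divInt, Rat.divInt_eq_div]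
      push_cast; ring
    have hxa : a < x := by
      rw [hxval, lt_div_iff₀ h2k]
      rw [hhidef] at he2
      linarith
    have hxc : x < c := by
      rw [hxval, div_lt_iff₀ h2k]
      rw [hlodef] at he1
      linarith
    refine ⟨x, hxa, lt_of_lt_of_le hxc hcb, ?_⟩
    -- derivative
    set m : ℕ := e.natAbs with hmdef
    have hme : (m:ℤ) = e := Int.natAbs_of_nonneg (le_of_lt he3)
    have hmne : m ≠ 0 := by omega
    have hmo : Odd m := Int.natAbs_odd.mpr he4
    set S : ℕ := ∑ p ∈ m.primeFactors, m.factorization p with hSdef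
    have h3S : 3^S ≤ m := odd_pow_le hmne hmo
    have hmq : (m:ℚ) = (e:ℚ) := by exact_mod_cast congrArg (Int.cast : ℤ → ℚ) hme
    have hmlt : (m:ℚ) < (-a)*2^k := by rw [hmq]; rw [hhidef] at he2; exact he2
    have hSk : S < k := by
      have h1 : (3:ℚ)^S < 3^k := by
        calc (3:ℚ)^S ≤ (m:ℚ) := by exact_mod_cast h3S
          _ < (-a)*2^k := hmlt
          _ ≤ 3^k := hbern
      exact_mod_cast (pow_lt_pow_iff_right₀ (by norm_num : (1:ℚ) < 3)).mp h1
    have hA : natLogDeriv m ≤ (k:ℚ)/3 := by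
      refine le_trans (natLogDeriv_le_odd hmo) ?_
      have : (S:ℚ) ≤ k := by exact_mod_cast le_of_lt hSk
      linarith
    have hB : natLogDeriv ((2:ℕ)^k) = (k:ℚ)/2 := natLogDeriv_two_pow k (by omega)
    have hnum : x.num = -e := rfl
    have hden : x.den = 2^k := rfl
    have hDx : ratArithDeriv x = x * (natLogDeriv m - natLogDeriv (2^k)) := by
      unfold ratArithDeriv
      rw [hnum, hden, Int.natAbs_neg]
    rw [hDx, hB]
    have hkQ : (0:ℚ) ≤ k := by positivity
    have ht : (k:ℚ)/6 ≤ (k:ℚ)/2 - natLogDeriv m := by linarith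
    have hxneg : -x ≥ -a/2 := by
      have : x ≤ a/2 := le_trans (le_of_lt hxc) hca2
      linarith
    have hxnn : (0:ℚ) ≤ -x := by
      have : x < 0 := lt_of_lt_of_le hxc (le_of_lt hc0)
      linarith
    have hmain : (-a/2) * ((k:ℚ)/6) ≤ (-x) * ((k:ℚ)/2 - natLogDeriv m) :=
      mul_le_mul hxneg ht (by linarith) hxnn
    have hL : L ≤ (-a/2) * ((k:ℚ)/6) := by
      rw [div_le_iff₀ (by linarith : (0:ℚ) < -a)] at hkL
      nlinarith
    have hre : x * (natLogDeriv m - (k:ℚ)/2) = (-x) * ((k:ℚ)/2 - natLogDeriv m) := by ring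
    rw [hre]
    linarith

lemma ratArithDeriv_neg (q : ℚ) : ratArithDeriv (-q) = -ratArithDeriv q := by
  have h1 : (-q).num = -q.num := rfl
  have h2 : (-q).den = q.den := rfl
  simp only [ratArithDeriv, h1, h2, Int.natAbs_neg]
  ring

end AuxArith

/-- Every open rational interval contains rational numbers with arbitrarily large and
arbitrarily small arithmetic derivative. -/
theorem stmt_16 (a b : ℚ) (hab : a < b) (L : ℚ) :
    (∃ x : ℚ, a < x ∧ x < b ∧ L ≤ ratArithDeriv x) ∧
    (∃ y : ℚ, a < y ∧ y < b ∧ ratArithDeriv y ≤ L) := by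
  constructor
  · exact exists_big a b hab L
  · obtain ⟨x, h1, h2, h3⟩ := exists_big (-b) (-a) (by linarith) (-L)
    refine ⟨-x, by linarith, by linarith, ?_⟩
    rw [ratArithDeriv_neg]
    linarith
end

section
/- Fix a natural number m ≥ 1. For every natural number n ≥ 2, write n = 2^a · B with B odd, and suppose a < m. Then D(n) < n·(m·(1/2 − log_3(2)/3) + log_3(n)/3). Moreover, the function f(n) = n·(m·(1/2 − log_3(2)/3) + log_3(n)/3) − ⌊log_2 n⌋ · 2^{⌊log_2 n⌋ − 1} tends to −∞ as n → ∞; consequently, for all sufficiently large such n, D(2^{⌊log_2 n⌋}) > D(n). -/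
lemma omega_le (B : ℕ) (hB0 : B ≠ 0) (hB : Odd B) :
    3 ^ (∑ p ∈ B.primeFactors, B.factorization p) ≤ B := by
  conv_rhs => rw [← Nat.factorization_prod_pow_eq_self hB0]
  rw [Nat.prod_factorization_eq_prod_primeFactors, ← Finset.prod_pow_eq_pow_sum]
  refine Finset.prod_le_prod' ?_
  intro p hp
  refine Nat.pow_le_pow_left ?_ _
  have hpp := Nat.prime_of_mem_primeFactors hp
  have hdvd := Nat.dvd_of_mem_primeFactors hp
  have hp2 : p ≠ 2 := by
    rintro rfl
    rw [Nat.odd_iff, Nat.two_dvd_ne_zero.symm] at hB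
    exact hB hdvd
  have := hpp.two_le
  omega

lemma deriv_le (n a B : ℕ) (hn : 2 ≤ n) (hB : Odd B) (heq : n = 2 ^ a * B) :
    (arithDeriv n : ℝ) ≤ n * ((a : ℝ) / 2 + Real.logb 3 B / 3) := by
  have hB0 : B ≠ 0 := by rintro rfl; simp at heq; omega
  have hn0 : (0:ℝ) < n := by positivity
  -- odd prime factorizations agree
  have hfac : ∀ p, p ≠ 2 → n.factorization p = B.factorization p := by
    intro p hp
    rw [heq, Nat.factorization_mul (by positivity) hB0]
    simp [Nat.Prime.factorization_pow Nat.prime_two, Finsupp.single_apply, Ne.symm hp]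
  have ha2 : n.factorization 2 ≤ a := by
    rw [heq, Nat.factorization_mul (by positivity) hB0]
    have : B.factorization 2 = 0 := by
      apply Nat.factorization_eq_zero_of_not_dvd
      rw [Nat.odd_iff, Nat.two_dvd_ne_zero.symm] at hB; exact hB
    simp [Nat.Prime.factorization_pow Nat.prime_two, this]
  -- cast sum to real with real division
  have hsum : (arithDeriv n : ℝ) = ∑ p ∈ n.primeFactors,
      (n.factorization p : ℝ) * ((n : ℝ) / p) := by
    rw [arithDeriv, Nat.cast_sum]
    refine Finset.sum_congr rfl fun p hp => ?_
    rw [Nat.cast_mul, Nat.cast_div (Nat.dvd_of_mem_primeFactors hp)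
      (by exact_mod_cast (Nat.prime_of_mem_primeFactors hp).pos.ne' : ((p:ℝ) ≠ 0))]
  -- sum over odd primes
  set S : ℝ := ∑ p ∈ n.primeFactors.erase 2,
      (n.factorization p : ℝ) * ((n : ℝ) / p) with hS
  have hsplit : (arithDeriv n : ℝ) ≤ (a : ℝ) * ((n:ℝ)/2) + S := by
    rw [hsum]
    by_cases h2 : 2 ∈ n.primeFactors
    · rw [← Finset.add_sum_erase _ _ h2]
      have : (n.factorization 2 : ℝ) ≤ (a : ℝ) := by exact_mod_cast ha2
      have hhalf : (0:ℝ) ≤ (n:ℝ)/2 := by positivity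
      gcongr
      norm_num
    · rw [Finset.erase_eq_of_notMem h2] at hS
      rw [← hS]
      have : (0:ℝ) ≤ (a : ℝ) * ((n:ℝ)/2) := by positivity
      linarith
  -- omega of B
  set Om : ℕ := ∑ p ∈ B.primeFactors, B.factorization p with hOm
  have hOmlog : (Om : ℝ) ≤ Real.logb 3 B := by
    have h3 : (3:ℝ) ^ Om ≤ (B:ℝ) := by exact_mod_cast omega_le B hB0 hB
    have := Real.logb_le_logb_of_le (b := 3) (by norm_num) (x := (3:ℝ)^Om)
      (by positivity) h3
    rwa [Real.logb_pow, Real.logb_self_eq_one (by norm_num), mul_one] at this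
  have hSle : S ≤ (Om : ℝ) * ((n:ℝ)/3) := by
    have step1 : S ≤ ∑ p ∈ n.primeFactors.erase 2,
        (n.factorization p : ℝ) * ((n : ℝ) / 3) := by
      rw [hS]
      refine Finset.sum_le_sum fun p hp => ?_
      have hpp := Nat.prime_of_mem_primeFactors (Finset.mem_of_mem_erase hp)
      have hp2 : p ≠ 2 := Finset.ne_of_mem_erase hp
      have hp3 : (3:ℝ) ≤ p := by
        have := hpp.two_le
        exact_mod_cast (by omega : 3 ≤ p)
      gcongr
    have step2 : ∑ p ∈ n.primeFactors.erase 2,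
        (n.factorization p : ℝ) * ((n : ℝ) / 3) = ((∑ p ∈ n.primeFactors.erase 2,
        n.factorization p : ℕ) : ℝ) * ((n:ℝ)/3) := by
      push_cast
      rw [Finset.sum_mul]
    have step3 : ∑ p ∈ n.primeFactors.erase 2, n.factorization p = Om := by
      rw [hOm]
      rw [Finset.sum_congr rfl fun p hp => hfac p (Finset.ne_of_mem_erase hp)]
      refine (Finset.sum_subset ?_ ?_).symm
      · intro p hp
        have hpB := Nat.prime_of_mem_primeFactors hp
        refine Finset.mem_erase.mpr ⟨?_, ?_⟩
        · rintro rfl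
          rw [Nat.odd_iff, Nat.two_dvd_ne_zero.symm] at hB
          exact hB (Nat.dvd_of_mem_primeFactors hp)
        · exact Nat.mem_primeFactors.mpr ⟨hpB, (Nat.dvd_of_mem_primeFactors hp).trans
            ⟨2^a, by rw [heq]; ring⟩, by omega⟩
      · intro p hp hnp
        exact Nat.factorization_eq_zero_of_not_dvd
          (fun hd => hnp (Nat.mem_primeFactors.mpr ⟨Nat.prime_of_mem_primeFactors
            (Finset.mem_of_mem_erase hp), hd, hB0⟩))
    calc S ≤ _ := step1
      _ = _ := step2
      _ = (Om:ℝ) * ((n:ℝ)/3) := by rw [step3]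
  have hOm3 : (Om : ℝ) * ((n:ℝ)/3) ≤ Real.logb 3 B * ((n:ℝ)/3) := by
    have : (0:ℝ) ≤ (n:ℝ)/3 := by positivity
    exact mul_le_mul_of_nonneg_right hOmlog this
  calc (arithDeriv n : ℝ) ≤ (a : ℝ) * ((n:ℝ)/2) + S := hsplit
    _ ≤ (a : ℝ) * ((n:ℝ)/2) + Real.logb 3 B * ((n:ℝ)/3) := by linarith
    _ = n * ((a : ℝ) / 2 + Real.logb 3 B / 3) := by ring

lemma part1_s19 (m : ℕ) (n a B : ℕ) (hn : 2 ≤ n) (hB : Odd B) (heq : n = 2 ^ a * B)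
    (ham : a < m) :
    (arithDeriv n : ℝ) < n * (m * (1 / 2 - Real.logb 3 2 / 3) + Real.logb 3 n / 3) := by
  have hB0 : B ≠ 0 := by rintro rfl; simp at heq; omega
  have hn0 : (0:ℝ) < n := by positivity
  have h1 := deriv_le n a B hn hB heq
  set c := Real.logb 3 2 with hc
  have hc1 : c < 1 := by
    have := Real.logb_lt_logb (b := 3) (by norm_num) (by norm_num : (0:ℝ) < 2)
      (by norm_num : (2:ℝ) < 3)
    rwa [Real.logb_self_eq_one (by norm_num)] at this
  have hlogn : Real.logb 3 n = a * c + Real.logb 3 B := by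
    rw [heq]
    push_cast
    rw [Real.logb_mul (by positivity) (by exact_mod_cast hB0), Real.logb_pow]
  rw [hlogn]
  have hma : (a : ℝ) + 1 ≤ m := by exact_mod_cast ham
  nlinarith [mul_pos hn0 (show (0:ℝ) < ((m:ℝ) - a) * (1/2 - c/3) by nlinarith)]

lemma part2 (m : ℕ) :
    Filter.Tendsto
      (fun n : ℕ =>
        (n : ℝ) * (m * (1 / 2 - Real.logb 3 2 / 3) + Real.logb 3 n / 3) -
          (⌊Real.logb 2 n⌋ : ℝ) * (2 : ℝ) ^ (⌊Real.logb 2 n⌋ - 1))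
      Filter.atTop Filter.atBot := by
  set l2 := Real.log 2 with hl2def
  set l3 := Real.log 3 with hl3def
  have hl2 : 0 < l2 := Real.log_pos (by norm_num)
  have hl3 : 0 < l3 := Real.log_pos (by norm_num)
  have hlog : 4 * l2 < 3 * l3 := by
    have h16 : 4 * l2 = Real.log 16 := by
      rw [show (16:ℝ) = 2 ^ (4:ℕ) by norm_num, Real.log_pow]; push_cast; ring
    have h27 : 3 * l3 = Real.log 27 := by
      rw [show (27:ℝ) = 3 ^ (3:ℕ) by norm_num, Real.log_pow]; push_cast; ring
    rw [h16, h27]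
    exact Real.log_lt_log (by norm_num) (by norm_num)
  set M : ℝ := (m : ℝ) * (1 / 2 - Real.logb 3 2 / 3) with hM
  set X₀ : ℝ := (M + 5/4) * (12 * l2 * l3) / (3 * l3 - 4 * l2) with hX0
  have hev : ∀ᶠ n : ℕ in Filter.atTop,
      (n : ℝ) * (M + Real.logb 3 n / 3) -
        (⌊Real.logb 2 n⌋ : ℝ) * (2 : ℝ) ^ (⌊Real.logb 2 n⌋ - 1) ≤ -(n : ℝ) := by
    have hX : ∀ᶠ n : ℕ in Filter.atTop, X₀ ≤ Real.log n :=
      (Real.tendsto_log_atTop.comp tendsto_natCast_atTop_atTop).eventually_ge_atTop X₀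
    filter_upwards [hX, Filter.eventually_ge_atTop 2] with n hXn hn2
    have hn0 : (0:ℝ) < n := by positivity
    set X := Real.log n with hX
    set L2 := Real.logb 2 n with hL2
    set k := ⌊L2⌋ with hk
    have hL21 : 1 ≤ L2 := by
      rw [hL2, show (1:ℝ) = Real.logb 2 2 from (Real.logb_self_eq_one (by norm_num)).symm]
      exact Real.logb_le_logb_of_le (by norm_num) (by norm_num) (by exact_mod_cast hn2)
    have hkL : (k : ℝ) ≤ L2 := Int.floor_le _
    have hLk : L2 - 1 ≤ (k : ℝ) := by
      have := Int.sub_one_lt_floor L2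
      linarith
    have hk1 : (1:ℝ) ≤ (k : ℝ) := by
      exact_mod_cast Int.le_floor.mpr (by exact_mod_cast hL21)
    have hpow : (n:ℝ)/4 ≤ (2:ℝ) ^ (k - 1) := by
      have e1 : (2:ℝ) ^ (k - 1) = (2:ℝ) ^ (((k - 1 : ℤ)) : ℝ) := by
        rw [Real.rpow_intCast]
      have e2 : (2:ℝ) ^ (L2 - 2 : ℝ) ≤ (2:ℝ) ^ (((k - 1 : ℤ)) : ℝ) := by
        apply Real.rpow_le_rpow_of_exponent_le one_le_two
        push_cast
        linarith
      have h22 : (2:ℝ) ^ (2:ℝ) = 4 := by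
        have := Real.rpow_natCast (2:ℝ) 2
        push_cast at this
        rw [this]; norm_num
      have e3 : (2:ℝ) ^ (L2 - 2 : ℝ) = (n:ℝ)/4 := by
        rw [Real.rpow_sub (by norm_num), hL2, Real.rpow_logb (by norm_num) (by norm_num) hn0,
          h22]
      rw [e1]
      rw [e3] at e2
      exact e2
    have hprod : (L2 - 1) * ((n:ℝ)/4) ≤ (k : ℝ) * (2:ℝ) ^ (k - 1) := by
      have hq : (0:ℝ) ≤ (n:ℝ)/4 := by positivity
      exact mul_le_mul hLk hpow hq (by linarith)
    -- key analytic inequality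
    have hstep : M + 5/4 + X/(3*l3) - X/(4*l2) ≤ 0 := by
      have hpos : (0:ℝ) < 3 * l3 - 4 * l2 := by linarith
      have hD : (0:ℝ) < 12 * l2 * l3 := by positivity
      have hM0 : 0 ≤ M := by
        rw [hM]
        have hc1 : Real.logb 3 2 < 1 := by
          have := Real.logb_lt_logb (b := 3) (by norm_num) (by norm_num : (0:ℝ) < 2)
            (by norm_num : (2:ℝ) < 3)
          rwa [Real.logb_self_eq_one (by norm_num)] at this
        have : (0:ℝ) ≤ (m:ℝ) := Nat.cast_nonneg m
        nlinarith
      have hX0prod : X₀ * (3 * l3 - 4 * l2) = (M + 5/4) * (12 * l2 * l3) :=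
        div_mul_cancel₀ _ hpos.ne'
      have hXprod : (M + 5/4) * (12 * l2 * l3) ≤ X * (3 * l3 - 4 * l2) := by
        rw [← hX0prod]
        exact mul_le_mul_of_nonneg_right hXn hpos.le
      have hdiv : X/(3*l3) - X/(4*l2) = (X*(4*l2) - X*(3*l3)) / (12*l2*l3) := by
        field_simp
        ring
      have h' : (X*(4*l2) - X*(3*l3)) / (12*l2*l3) ≤ -(M + 5/4) := by
        rw [div_le_iff₀ hD]
        nlinarith
      linarith [hdiv, h']
    have hlogb3 : Real.logb 3 n / 3 = X/(3*l3) := by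
      rw [Real.logb, hX, hl3def]; ring
    have hL2X : L2 = X / l2 := by rw [hL2, Real.logb, hX, hl2def]
    have hfinal : (n : ℝ) * (M + X/(3*l3)) - (X/l2 - 1) * ((n:ℝ)/4) ≤ -(n:ℝ) := by
      have hid : (n : ℝ) * (M + X/(3*l3)) - (X/l2 - 1) * ((n:ℝ)/4) + (n:ℝ)
          = (n:ℝ) * (M + 5/4 + X/(3*l3) - X/(4*l2)) := by
        ring
      have := mul_nonpos_of_nonneg_of_nonpos hn0.le hstep
      linarith
    rw [hlogb3]
    rw [hL2X] at hprod
    linarith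
  have hneg : Filter.Tendsto (fun n : ℕ => -(n:ℝ)) Filter.atTop Filter.atBot :=
    Filter.tendsto_neg_atTop_atBot.comp tendsto_natCast_atTop_atTop
  exact Filter.tendsto_atBot_mono' _ hev hneg

lemma arithDeriv_two_pow (k : ℕ) (hk : 1 ≤ k) : arithDeriv (2 ^ k) = k * 2 ^ (k - 1) := by
  unfold arithDeriv
  rw [Nat.primeFactors_prime_pow (by omega) Nat.prime_two]
  simp [Nat.Prime.factorization_pow Nat.prime_two, Nat.pow_div hk]


/-- `Λ n` is the smallest `m ≤ n` such that `D m = max (D 0, D 1, …, D n)`. -/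
noncomputable def arithLambda (n : ℕ) : ℕ := sInf {m : ℕ | m ≤ n ∧ ∀ j ≤ n, arithDeriv j ≤ arithDeriv m}

/-- Fix `m ≥ 1`. If `n = 2^a * B ≥ 2` with `B` odd and `a < m`, then
`D n < n * (m * (1/2 - log₃ 2 / 3) + log₃ n / 3)`; moreover
`f n = n * (m * (1/2 - log₃ 2 / 3) + log₃ n / 3) - ⌊log₂ n⌋ * 2 ^ (⌊log₂ n⌋ - 1)`
tends to `-∞`, so for all sufficiently large such `n`, `D (2 ^ ⌊log₂ n⌋) > D n`. -/
theorem stmt_19 (m : ℕ) (hm : 1 ≤ m) :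
    (∀ n a B : ℕ, 2 ≤ n → Odd B → n = 2 ^ a * B → a < m →
      (arithDeriv n : ℝ) <
        n * (m * (1 / 2 - Real.logb 3 2 / 3) + Real.logb 3 n / 3)) ∧
    Filter.Tendsto
      (fun n : ℕ =>
        (n : ℝ) * (m * (1 / 2 - Real.logb 3 2 / 3) + Real.logb 3 n / 3) -
          (⌊Real.logb 2 n⌋ : ℝ) * (2 : ℝ) ^ (⌊Real.logb 2 n⌋ - 1))
      Filter.atTop Filter.atBot ∧
    (∃ N : ℕ, ∀ n a B : ℕ, N ≤ n → 2 ≤ n → Odd B → n = 2 ^ a * B → a < m →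
      arithDeriv n < arithDeriv (2 ^ Nat.log 2 n)) := by
  refine ⟨fun n a B hn hB heq ham => part1_s19 m n a B hn hB heq ham, part2 m, ?_⟩
  have h2 := part2 m
  have hev : ∀ᶠ n : ℕ in Filter.atTop,
      (n : ℝ) * (m * (1 / 2 - Real.logb 3 2 / 3) + Real.logb 3 n / 3) -
        (⌊Real.logb 2 n⌋ : ℝ) * (2 : ℝ) ^ (⌊Real.logb 2 n⌋ - 1) < 0 :=
    h2.eventually (Filter.eventually_lt_atBot 0)
  obtain ⟨N, hN⟩ := Filter.eventually_atTop.mp hev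
  refine ⟨N, fun n a B hNn hn hB heq ham => ?_⟩
  have hflt := hN n hNn
  have h1 := part1_s19 m n a B hn hB heq ham
  set K := Nat.log 2 n with hK
  have hK1 : 1 ≤ K := Nat.log_pos (by norm_num) hn
  have hfloor : ⌊Real.logb 2 (n : ℝ)⌋ = (K : ℤ) := by
    rw [show (2:ℝ) = ((2:ℕ):ℝ) by norm_num]
    rw [Real.floor_logb_natCast (Nat.cast_nonneg n), Int.log_natCast]
  have hcast : ((⌊Real.logb 2 (n:ℝ)⌋ : ℝ) * (2:ℝ) ^ (⌊Real.logb 2 (n:ℝ)⌋ - 1))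
      = ((K * 2 ^ (K - 1) : ℕ) : ℝ) := by
    rw [hfloor]
    rw [show (K : ℤ) - 1 = ((K - 1 : ℕ) : ℤ) by omega, zpow_natCast]
    push_cast
    ring
  have : (arithDeriv n : ℝ) < ((K * 2 ^ (K - 1) : ℕ) : ℝ) := by
    rw [← hcast]
    linarith
  rw [arithDeriv_two_pow K hK1]
  exact_mod_cast this
end
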